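/- Let L be a finite-dimensional nilpotent Lie algebra over a field k with dim L = n, dim [L,L] = m and dim Z(L) = d. Then dim M(L) ≤ (1/2)(n−m)(n−m−1) + m(n−d−1). -/

import Mathlib

private lemma card_lt_pairs (s : ℕ) :
    (Finset.univ.filter fun p : Fin s × Fin s => p.1 < p.2).card = s.choose 2 := by
  have h := Finset.card_powersetCard 2 (Finset.univ : Finset (Fin s))
  rw [Finset.card_univ, Fintype.card_fin] at h
  rw [← h]
  apply Finset.card_bij (fun p _ => ({p.1, p.2} : Finset (Fin s)))
  · intro p hp
    simp only [Finset.mem_filter] at hp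
    rw [Finset.mem_powersetCard]
    exact ⟨Finset.subset_univ _, Finset.card_pair hp.2.ne⟩
  · intro p hp q hq hpq
    simp only [Finset.mem_filter] at hp hq
    have hset : ({p.1, p.2} : Set (Fin s)) = {q.1, q.2} := by
      have h2 := congrArg (fun t : Finset (Fin s) => (t : Set (Fin s))) hpq
      simpa using h2
    rcases Set.pair_eq_pair_iff.1 hset with ⟨h1, h2⟩ | ⟨h1, h2⟩
    · exact Prod.ext h1 h2
    · exfalso
      rw [h1, h2] at hp
      exact lt_asymm hp.2 hq.2
  · intro t ht
    rw [Finset.mem_powersetCard] at ht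
    obtain ⟨a, b, hab, rfl⟩ := Finset.card_eq_two.1 ht.2
    rcases hab.lt_or_gt with h | h
    · exact ⟨(a, b), Finset.mem_filter.2 ⟨Finset.mem_univ _, h⟩, rfl⟩
    · exact ⟨(b, a), Finset.mem_filter.2 ⟨Finset.mem_univ _, h⟩, by rw [Finset.pair_comm]⟩

private lemma span_range_coe {k L : Type*} [Field k] [AddCommGroup L] [Module k L]
    (p : Submodule k L) {ι : Type*} (b : Module.Basis ι k p) :
    Submodule.span k (Set.range fun i => ((b i : p) : L)) = p := by
  have h := congrArg (Submodule.map p.subtype) b.span_eq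
  rwa [Submodule.map_span, Submodule.map_subtype_top, ← Set.range_comp] at h

/-- The dimension of the Schur multiplier `M(L) = (R ∩ [F,F]) / [F,R]` of a Lie algebra `L`
computed from a free presentation `π : F ↠ L`, `F` a free Lie algebra, `R = ker π`
(Hopf formula). -/
noncomputable def schurMultiplierDim (k : Type*) [Field k] {X : Type*} {L : Type*}
    [LieRing L] [LieAlgebra k L] (π : FreeLieAlgebra k X →ₗ⁅k⁆ L) : ℕ :=
  let F := FreeLieAlgebra k X
  let R : LieIdeal k F := π.ker
  let D : LieIdeal k F := ⁅(⊤ : LieIdeal k F), (⊤ : LieIdeal k F)⁆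
  let S : Submodule k F := (R ⊓ D : LieIdeal k F)
  Module.finrank k
    (↥S ⧸ (Submodule.comap S.subtype ((⁅(⊤ : LieIdeal k F), R⁆ : LieIdeal k F) : Submodule k F)))

set_option maxHeartbeats 2000000 in
/-- For a finite-dimensional nilpotent Lie algebra `L` with `dim L = n`,
`dim [L,L] = m`, `dim Z(L) = d`, every free presentation gives
`dim M(L) ≤ (1/2)(n−m)(n−m−1) + m(n−d−1)`. -/
theorem schurMultiplier_le_of_nilpotent
    (k : Type*) [Field k] (L : Type*) [LieRing L] [LieAlgebra k L]
    [FiniteDimensional k L] [LieRing.IsNilpotent L]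
    (n m d : ℕ)
    (hn : n = Module.finrank k L)
    (hm : m = Module.finrank k (LieAlgebra.derivedSeries k L 1 : LieIdeal k L))
    (hd : d = Module.finrank k (LieAlgebra.center k L : LieIdeal k L))
    {X : Type*} (π : FreeLieAlgebra k X →ₗ⁅k⁆ L) (hπ : Function.Surjective π) :
    (schurMultiplierDim k π : ℚ) ≤
      (1 / 2 : ℚ) * ((n : ℚ) - m) * ((n : ℚ) - m - 1) + m * ((n : ℚ) - d - 1) := by
  classical
  subst hn hm hd
  set F := FreeLieAlgebra k X with hFdef
  set R : LieIdeal k F := π.ker with hRdef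
  set D : LieIdeal k F := ⁅(⊤ : LieIdeal k F), (⊤ : LieIdeal k F)⁆ with hDdef
  set Rs : Submodule k F := LieSubmodule.toSubmodule R with hRsdef
  set Ds : Submodule k F := LieSubmodule.toSubmodule D with hDsdef
  set Js : Submodule k F :=
    LieSubmodule.toSubmodule (⁅(⊤ : LieIdeal k F), R⁆ : LieIdeal k F) with hJsdef
  set Ss : Submodule k F := LieSubmodule.toSubmodule (R ⊓ D : LieIdeal k F) with hSsdef
  have hJR : Js ≤ Rs :=
    (LieSubmodule.toSubmodule_le_toSubmodule _ _).2 (LieSubmodule.lie_le_right _ _)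
  have hJD : Js ≤ Ds :=
    (LieSubmodule.toSubmodule_le_toSubmodule _ _).2 (LieSubmodule.mono_lie_right _ le_top)
  have hSs : Ss = Rs ⊓ Ds := LieSubmodule.inf_toSubmodule R D
  have hJS : Js ≤ Ss := by rw [hSs]; exact le_inf hJR hJD
  have hRker : Rs = LinearMap.ker π.toLinearMap := π.ker_toSubmodule
  have hJker : Js ≤ LinearMap.ker π.toLinearMap := hRker ▸ hJR
  set Fb := F ⧸ Js with hFbdef
  set mk : F →ₗ[k] Fb := Js.mkQ with hmkdef
  set πb : Fb →ₗ[k] L := Js.liftQ π.toLinearMap hJker with hπbdef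
  have hπbmk : ∀ u : F, πb (mk u) = π u := fun u => rfl
  -- a linear section of π
  obtain ⟨σ, hσ⟩ := π.toLinearMap.exists_rightInverse_of_surjective
    (LinearMap.range_eq_top.2 (by rw [LieHom.coe_toLinearMap]; exact hπ))
  have hσ' : ∀ x : L, π (σ x) = x := by
    intro x
    have := LinearMap.ext_iff.1 hσ x
    simpa using this
  -- the induced bilinear map
  set B : L →ₗ[k] L →ₗ[k] Fb := LinearMap.mk₂ k (fun x y => mk ⁅σ x, σ y⁆)
    (fun x x' y => show mk ⁅σ (x + x'), σ y⁆ = mk ⁅σ x, σ y⁆ + mk ⁅σ x', σ y⁆ by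
      rw [map_add, add_lie, map_add])
    (fun c x y => show mk ⁅σ (c • x), σ y⁆ = c • mk ⁅σ x, σ y⁆ by
      rw [map_smul, smul_lie, map_smul])
    (fun x y y' => show mk ⁅σ x, σ (y + y')⁆ = mk ⁅σ x, σ y⁆ + mk ⁅σ x, σ y'⁆ by
      rw [map_add, lie_add, map_add])
    (fun c x y => show mk ⁅σ x, σ (c • y)⁆ = c • mk ⁅σ x, σ y⁆ by
      rw [map_smul, ← lie_skew, ← lie_skew (σ x), smul_lie, map_neg, map_neg, map_smul,
        smul_neg]) with hBdef
  have hBapp : ∀ x y : L, B x y = mk ⁅σ x, σ y⁆ := fun x y => rfl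
  have hmem_bracket : ∀ (u : F), ∀ r ∈ Rs, ⁅u, r⁆ ∈ Js := by
    intro u r hr
    exact LieSubmodule.lie_mem_lie (LieSubmodule.mem_top u) hr
  have hmem_bracket' : ∀ (u : F), ∀ r ∈ Rs, ⁅r, u⁆ ∈ Js := by
    intro u r hr
    rw [← lie_skew]
    exact Js.neg_mem (hmem_bracket u r hr)
  have hsec : ∀ u : F, σ (π u) - u ∈ Rs := by
    intro u
    rw [hRker, LinearMap.mem_ker, map_sub]
    show π (σ (π u)) - π u = 0
    rw [hσ', sub_self]
  have hBπ : ∀ u v : F, B (π u) (π v) = mk ⁅u, v⁆ := by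
    intro u v
    have key : ⁅σ (π u), σ (π v)⁆ - ⁅u, v⁆ ∈ Js := by
      have hid : ⁅σ (π u), σ (π v)⁆ - ⁅u, v⁆
          = ⁅u, σ (π v) - v⁆ + ⁅σ (π u) - u, v⁆ + ⁅σ (π u) - u, σ (π v) - v⁆ := by
        simp only [lie_sub, sub_lie]
        abel
      rw [hid]
      exact add_mem (add_mem (hmem_bracket _ _ (hsec v)) (hmem_bracket' _ _ (hsec u)))
        (hmem_bracket _ _ (hsec v))
    rw [hBapp]
    have h0 : mk (⁅σ (π u), σ (π v)⁆ - ⁅u, v⁆) = 0 := by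
      rw [hmkdef, Submodule.mkQ_apply, Submodule.Quotient.mk_eq_zero]
      exact key
    rw [map_sub, sub_eq_zero] at h0
    exact h0
  have hBskew : ∀ x y : L, B y x = - B x y := by
    intro x y
    rw [hBapp, hBapp, ← map_neg, ← lie_skew]
  have hBzero : ∀ x : L, B x x = 0 := by
    intro x
    rw [hBapp, lie_self, map_zero]
  -- spans
  set sD : Set F := {w | ∃ x ∈ (⊤ : LieIdeal k F), ∃ u ∈ (⊤ : LieIdeal k F), ⁅x, u⁆ = w}
    with hsDdef
  have hDspan : Ds = Submodule.span k sD := LieSubmodule.lieIdeal_oper_eq_linear_span' _ _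
  set Ls : Submodule k L :=
    LieSubmodule.toSubmodule (LieAlgebra.derivedSeries k L 1 : LieIdeal k L) with hLsdef
  set Zs : Submodule k L :=
    LieSubmodule.toSubmodule (LieAlgebra.center k L : LieIdeal k L) with hZsdef
  have hder1 : (LieAlgebra.derivedSeries k L 1 : LieIdeal k L)
      = ⁅(⊤ : LieIdeal k L), (⊤ : LieIdeal k L)⁆ := by
    rw [LieAlgebra.derivedSeries_def, LieAlgebra.derivedSeriesOfIdeal_succ,
      LieAlgebra.derivedSeriesOfIdeal_zero]
  have hLspan : Ls = Submodule.span k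
      {w | ∃ x ∈ (⊤ : LieIdeal k L), ∃ u ∈ (⊤ : LieIdeal k L), ⁅x, u⁆ = w} := by
    rw [hLsdef, hder1]
    exact LieSubmodule.lieIdeal_oper_eq_linear_span' _ _
  have hmapD : Submodule.map π.toLinearMap Ds = Ls := by
    rw [hDspan, Submodule.map_span, hLspan]
    apply le_antisymm
    · rw [Submodule.span_le]
      rintro _ ⟨w, ⟨u, -, v, -, rfl⟩, rfl⟩
      apply Submodule.subset_span
      exact ⟨π u, LieSubmodule.mem_top _, π v, LieSubmodule.mem_top _,
        by simp [LieHom.coe_toLinearMap, LieHom.map_lie]⟩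
    · rw [Submodule.span_le]
      rintro _ ⟨x, -, y, -, rfl⟩
      obtain ⟨u, rfl⟩ := hπ x
      obtain ⟨v, rfl⟩ := hπ y
      apply Submodule.subset_span
      exact ⟨⁅u, v⁆, ⟨u, LieSubmodule.mem_top _, v, LieSubmodule.mem_top _, rfl⟩,
        by simp [LieHom.coe_toLinearMap, LieHom.map_lie]⟩
  -- vanishing on [L,L] × Z(L)
  have hvan : ∀ x ∈ Ls, ∀ z ∈ Zs, B x z = 0 := by
    intro x hx z hz
    have hzc : ∀ y : L, ⁅y, z⁆ = 0 := (LieModule.mem_maxTrivSubmodule k L L z).1 hz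
    rw [← hmapD] at hx
    have hfJ : ∀ f ∈ Ds, ⁅f, σ z⁆ ∈ Js := by
      intro f hf
      rw [hDspan] at hf
      induction hf using Submodule.span_induction with
      | mem w hw =>
        obtain ⟨a, -, b, -, rfl⟩ := hw
        have hb : ⁅b, σ z⁆ ∈ Rs := by
          rw [hRker, LinearMap.mem_ker]
          show π ⁅b, σ z⁆ = 0
          rw [LieHom.map_lie, hσ', hzc]
        have ha : ⁅a, σ z⁆ ∈ Rs := by
          rw [hRker, LinearMap.mem_ker]
          show π ⁅a, σ z⁆ = 0
          rw [LieHom.map_lie, hσ', hzc]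
        rw [lie_lie]
        exact sub_mem (hmem_bracket a _ hb) (hmem_bracket b _ ha)
      | zero => rw [zero_lie]; exact Js.zero_mem
      | add u v hu hv ihu ihv => rw [add_lie]; exact add_mem ihu ihv
      | smul c u hu ihu => rw [smul_lie]; exact Js.smul_mem c ihu
    obtain ⟨f, hf, hfx⟩ := Submodule.mem_map.1 hx
    have hfx' : π f = x := hfx
    have hBxz : B x z = mk ⁅f, σ z⁆ := by
      rw [← hfx', ← hσ' z, hBπ, hσ' z]
    rw [hBxz, hmkdef, Submodule.mkQ_apply, Submodule.Quotient.mk_eq_zero]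
    exact hfJ f hf
  -- the image of D in Fb
  have hDq : Submodule.map mk Ds = Submodule.map₂ B ⊤ ⊤ := by
    apply le_antisymm
    · rw [hDspan, Submodule.map_span, Submodule.span_le]
      rintro _ ⟨w, ⟨u, -, v, -, rfl⟩, rfl⟩
      have : mk ⁅u, v⁆ = B (π u) (π v) := (hBπ u v).symm
      rw [show Js.mkQ ⁅u, v⁆ = mk ⁅u, v⁆ from rfl, this]
      exact Submodule.apply_mem_map₂ B Submodule.mem_top Submodule.mem_top
    · rw [Submodule.map₂_le]
      intro x _ y _
      rw [hBapp]
      exact Submodule.mem_map_of_mem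
        (LieSubmodule.lie_mem_lie (LieSubmodule.mem_top _) (LieSubmodule.mem_top _))
  -- complements and bases
  obtain ⟨C1, hC1⟩ := Submodule.exists_isCompl Ls
  obtain ⟨C2, hC2⟩ := Submodule.exists_isCompl Zs
  set b1 := Module.finBasis k C1 with hb1def
  set bm := Module.finBasis k Ls with hbmdef
  set b2 := Module.finBasis k C2 with hb2def
  set m1 := Module.finrank k C1 with hm1def
  set d1 := Module.finrank k C2 with hd1def
  set mL := Module.finrank k Ls with hmLdef
  set T1 : Finset Fb := (Finset.univ.filter fun p : Fin m1 × Fin m1 => p.1 < p.2).image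
      (fun p => B (b1 p.1 : L) (b1 p.2 : L)) with hT1def
  set T2 : Finset Fb := (Finset.univ : Finset (Fin mL × Fin d1)).image
      (fun p => B (bm p.1 : L) (b2 p.2 : L)) with hT2def
  set W : Submodule k Fb := Submodule.span k ((T1 ∪ T2 : Finset Fb) : Set Fb) with hWdef
  have hT1W : ∀ x ∈ T1, x ∈ W := fun x hx =>
    Submodule.subset_span (Finset.mem_coe.2 (Finset.mem_union_left _ hx))
  have hT2W : ∀ x ∈ T2, x ∈ W := fun x hx =>
    Submodule.subset_span (Finset.mem_coe.2 (Finset.mem_union_right _ hx))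
  -- spanning estimate
  have hL'top : Submodule.map₂ B Ls ⊤ ≤ W := by
    have h1 : Submodule.map₂ B Ls Zs ≤ W := by
      rw [Submodule.map₂_le]
      intro a ha z hz
      rw [hvan a ha z hz]
      exact W.zero_mem
    have h2 : Submodule.map₂ B Ls C2 ≤ W := by
      rw [← span_range_coe Ls bm, ← span_range_coe C2 b2, Submodule.map₂_span_span,
        Submodule.span_le]
      rintro _ ⟨a, ⟨i, rfl⟩, b, ⟨j, rfl⟩, rfl⟩
      dsimp only
      exact hT2W _ (Finset.mem_image.2 ⟨(i, j), Finset.mem_univ _, rfl⟩)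
    calc Submodule.map₂ B Ls ⊤ = Submodule.map₂ B Ls (Zs ⊔ C2) := by rw [hC2.sup_eq_top]
      _ = Submodule.map₂ B Ls Zs ⊔ Submodule.map₂ B Ls C2 := Submodule.map₂_sup_right B Ls Zs C2
      _ ≤ W := sup_le h1 h2
  have hC1L' : Submodule.map₂ B C1 Ls ≤ W := by
    rw [Submodule.map₂_le]
    intro c hc a ha
    rw [hBskew a c]
    exact W.neg_mem (hL'top (Submodule.apply_mem_map₂ B ha Submodule.mem_top))
  have hC1C1 : Submodule.map₂ B C1 C1 ≤ W := by
    rw [← span_range_coe C1 b1, Submodule.map₂_span_span, Submodule.span_le]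
    rintro _ ⟨a, ⟨i, rfl⟩, b, ⟨j, rfl⟩, rfl⟩
    dsimp only
    rw [SetLike.mem_coe]
    rcases lt_trichotomy i j with h | h | h
    · exact hT1W _ (Finset.mem_image.2 ⟨(i, j),
        Finset.mem_filter.2 ⟨Finset.mem_univ _, h⟩, rfl⟩)
    · subst h
      rw [hBzero]
      exact W.zero_mem
    · rw [hBskew (b1 j : L) (b1 i : L)]
      exact W.neg_mem (hT1W _ (Finset.mem_image.2 ⟨(j, i),
        Finset.mem_filter.2 ⟨Finset.mem_univ _, h⟩, rfl⟩))
  have hTspan : Submodule.map₂ B ⊤ ⊤ ≤ W := by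
    calc Submodule.map₂ B ⊤ ⊤ = Submodule.map₂ B (Ls ⊔ C1) ⊤ := by rw [hC1.sup_eq_top]
      _ = Submodule.map₂ B Ls ⊤ ⊔ Submodule.map₂ B C1 ⊤ := Submodule.map₂_sup_left B Ls C1 ⊤
      _ ≤ W := by
          refine sup_le hL'top ?_
          calc Submodule.map₂ B C1 ⊤ = Submodule.map₂ B C1 (Ls ⊔ C1) := by rw [hC1.sup_eq_top]
            _ = Submodule.map₂ B C1 Ls ⊔ Submodule.map₂ B C1 C1 :=
                Submodule.map₂_sup_right B C1 Ls C1
            _ ≤ W := sup_le hC1L' hC1C1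
  set Dq : Submodule k Fb := Submodule.map mk Ds with hDqdef
  set Sq : Submodule k Fb := Submodule.map mk Ss with hSqdef
  have hDqle : Dq ≤ W := le_trans (le_of_eq hDq) hTspan
  haveI hWfd : FiniteDimensional k W := by
    rw [hWdef]
    infer_instance
  haveI hDqfd : FiniteDimensional k Dq := Submodule.finiteDimensional_of_le hDqle
  have hDqcard : Module.finrank k Dq ≤ m1.choose 2 + mL * d1 := by
    calc Module.finrank k Dq ≤ Module.finrank k W := Submodule.finrank_mono hDqle
      _ ≤ (T1 ∪ T2).card := finrank_span_finset_le_card _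
      _ ≤ T1.card + T2.card := Finset.card_union_le _ _
      _ ≤ m1.choose 2 + mL * d1 := by
          have h1 : T1.card ≤ m1.choose 2 := by
            rw [hT1def, ← card_lt_pairs m1]
            exact Finset.card_image_le
          have h2 : T2.card ≤ mL * d1 := by
            calc T2.card ≤ (Finset.univ : Finset (Fin mL × Fin d1)).card :=
                Finset.card_image_le
              _ = mL * d1 := by simp [Finset.card_univ]
          omega
  -- rank-nullity
  set f' : Dq →ₗ[k] L := πb.comp Dq.subtype with hf'def
  have hrange : LinearMap.range f' = Ls := by
    rw [hf'def, LinearMap.range_comp, Submodule.range_subtype, hDqdef,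
      ← Submodule.map_comp, hπbdef, hmkdef, Submodule.liftQ_mkQ]
    exact hmapD
  have hker : LinearMap.ker f' = Submodule.comap Dq.subtype Sq := by
    ext x
    rw [LinearMap.mem_ker, Submodule.mem_comap, Submodule.subtype_apply]
    have hfx : f' x = πb (↑x : Fb) := rfl
    constructor
    · intro hx0
      obtain ⟨u, hu, hux⟩ := Submodule.mem_map.1 x.2
      have hπu : π u = 0 := by
        have h1 : πb (mk u) = 0 := by rw [hux, ← hfx]; exact hx0
        rwa [hπbmk] at h1
      have huS : u ∈ Ss := by
        rw [hSs]
        exact ⟨by rw [hRker]; exact hπu, hu⟩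
      rw [← hux]
      exact Submodule.mem_map_of_mem huS
    · intro hx
      obtain ⟨v, hv, hvx⟩ := Submodule.mem_map.1 hx
      have hvR : v ∈ Rs := by rw [hSs] at hv; exact hv.1
      rw [hfx, ← hvx, hπbmk]
      rw [hRker] at hvR
      exact hvR
  have hSqDq : Sq ≤ Dq := Submodule.map_mono (by rw [hSs]; exact inf_le_right)
  have hrn := LinearMap.finrank_range_add_finrank_ker f'
  have hrangerank : Module.finrank k (LinearMap.range f') = mL := by rw [hrange]
  have hkerrank : Module.finrank k (LinearMap.ker f') = Module.finrank k Sq := by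
    rw [hker]
    exact (Submodule.comapSubtypeEquivOfLe hSqDq).finrank_eq
  -- identify the Schur multiplier dimension
  set g : Ss →ₗ[k] Fb := mk.comp Ss.subtype with hgdef
  have hgker : LinearMap.ker g = Submodule.comap Ss.subtype Js := by
    rw [hgdef, LinearMap.ker_comp, hmkdef, Submodule.ker_mkQ]
  have hgrange : LinearMap.range g = Sq := by
    rw [hgdef, LinearMap.range_comp, Submodule.range_subtype]
  have hschur : schurMultiplierDim k π = Module.finrank k Sq := by
    have e1 : (↥Ss ⧸ Submodule.comap Ss.subtype Js) ≃ₗ[k] Sq :=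
      (Submodule.quotEquivOfEq _ _ hgker.symm).trans
        (g.quotKerEquivRange.trans (LinearEquiv.ofEq _ _ hgrange))
    have h0 : schurMultiplierDim k π
        = Module.finrank k (↥Ss ⧸ Submodule.comap Ss.subtype Js) := rfl
    rw [h0, e1.finrank_eq]
  -- final arithmetic
  have hcomp1 : mL + m1 = Module.finrank k L := Submodule.finrank_add_eq_of_isCompl hC1
  have hcomp2 : Module.finrank k Zs + d1 = Module.finrank k L :=
    Submodule.finrank_add_eq_of_isCompl hC2
  have hmLeq : Module.finrank k (LieAlgebra.derivedSeries k L 1 : LieIdeal k L) = mL := rfl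
  have hdZeq : Module.finrank k (LieAlgebra.center k L : LieIdeal k L)
      = Module.finrank k Zs := rfl
  rw [hschur, hmLeq, hdZeq]
  have hq1 : (mL : ℚ) + m1 = Module.finrank k L := by exact_mod_cast hcomp1
  have hq2 : (Module.finrank k Zs : ℚ) + d1 = Module.finrank k L := by exact_mod_cast hcomp2
  have hq3 : (Module.finrank k Sq : ℚ) + mL = Module.finrank k Dq := by
    have : mL + Module.finrank k Sq = Module.finrank k Dq := by
      rw [← hrangerank, ← hkerrank]
      exact hrn
    push_cast [← this]
    ring
  have hq4 : (Module.finrank k Dq : ℚ) ≤ (m1 : ℚ) * (m1 - 1) / 2 + mL * d1 := by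
    have := hDqcard
    have hcast : ((m1.choose 2 : ℕ) : ℚ) = (m1 : ℚ) * ((m1 : ℚ) - 1) / 2 :=
      Nat.cast_choose_two (K := ℚ) m1
    calc (Module.finrank k Dq : ℚ) ≤ ((m1.choose 2 + mL * d1 : ℕ) : ℚ) := by exact_mod_cast this
      _ = (m1 : ℚ) * (m1 - 1) / 2 + mL * d1 := by push_cast [hcast]; ring
  have hrw1 : (Module.finrank k L : ℚ) - mL = m1 := by linarith
  have hrw2 : (Module.finrank k L : ℚ) - Module.finrank k Zs = d1 := by linarith
  rw [hrw1, hrw2]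
  linarith
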